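/- Let G be a finite non-nilpotent group such that nil_G(x) is a subgroup of G for every x ∈ G (an n-group). Then the induced subgraph of the non-nilpotent graph on G \ nil(G) is connected of diameter exactly 2; in particular, for any two nonadjacent vertices x, y ∈ G \ nil(G) there exists z with ⟨x,z⟩ and ⟨y,z⟩ both non-nilpotent. -/

import Mathlib

def nilizer {G : Type*} [Group G] (x : G) : Set G :=
  {g | Group.IsNilpotent (Subgroup.closure ({x, g} : Set G))}

def nilSet (G : Type*) [Group G] : Set G :=
  {x | ∀ y : G, Group.IsNilpotent (Subgroup.closure ({x, y} : Set G))}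

/-- The non-nilpotent graph of a group: distinct `x, y` are adjacent iff
`⟨x, y⟩` is not nilpotent. -/
def nonNilpGraph (G : Type*) [Group G] : SimpleGraph G where
  Adj x y := x ≠ y ∧ ¬ Group.IsNilpotent (Subgroup.closure ({x, y} : Set G))
  symm := by
    constructor
    rintro x y ⟨h1, h2⟩
    exact ⟨h1.symm, by rwa [Set.pair_comm]⟩
  loopless := by constructor; rintro x ⟨h, -⟩; exact h rfl


open Subgroup

section Aux
variable {G : Type*} [Group G]

lemma mem_closure_pair_left (x y : G) : x ∈ closure ({x, y} : Set G) :=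
  Subgroup.subset_closure (Set.mem_insert _ _)

lemma mem_closure_pair_right (x y : G) : y ∈ closure ({x, y} : Set G) :=
  Subgroup.subset_closure (Set.mem_insert_of_mem _ rfl)

lemma nilp_pair_self (x : G) : Group.IsNilpotent (closure ({x, x} : Set G)) := by
  rw [Set.pair_eq_singleton, ← zpowers_eq_closure]
  open scoped IsMulCommutative in infer_instance

lemma closure_pair_inv (x y : G) :
    closure ({x⁻¹, y} : Set G) = closure ({x, y} : Set G) := by
  apply le_antisymm
  · rw [closure_le]
    intro a ha
    rcases Set.mem_insert_iff.mp ha with h | h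
    · rw [h]; exact inv_mem (mem_closure_pair_left x y)
    · rw [Set.mem_singleton_iff] at h; rw [h]; exact mem_closure_pair_right x y
  · rw [closure_le]
    intro a ha
    rcases Set.mem_insert_iff.mp ha with h | h
    · rw [h]
      have := inv_mem (mem_closure_pair_left x⁻¹ y)
      rwa [inv_inv] at this
    · rw [Set.mem_singleton_iff] at h; rw [h]; exact mem_closure_pair_right x⁻¹ y

lemma closure_pair_self_inv (x : G) :
    closure ({x, x⁻¹} : Set G) = zpowers x := by
  apply le_antisymm
  · rw [closure_le]
    intro a ha
    rcases Set.mem_insert_iff.mp ha with rfl | rfl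
    · exact mem_zpowers a
    · exact inv_mem (mem_zpowers x)
  · rw [zpowers_eq_closure]
    exact closure_mono (Set.singleton_subset_iff.mpr (Set.mem_insert _ _))

lemma nilp_pair_self_inv (x : G) : Group.IsNilpotent (closure ({x, x⁻¹} : Set G)) := by
  rw [closure_pair_self_inv]; open scoped IsMulCommutative in infer_instance

lemma closure_pair_one (y : G) :
    closure ({(1 : G), y} : Set G) = zpowers y := by
  apply le_antisymm
  · rw [closure_le]
    intro a ha
    rcases Set.mem_insert_iff.mp ha with rfl | rfl
    · exact one_mem _
    · exact mem_zpowers a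
  · rw [zpowers_eq_closure]
    exact closure_mono (Set.singleton_subset_iff.mpr (Set.mem_insert_of_mem _ rfl))

lemma nilp_pair_one (y : G) : Group.IsNilpotent (closure ({(1 : G), y} : Set G)) := by
  rw [closure_pair_one]; open scoped IsMulCommutative in infer_instance

/-- conjugation preserves nilpotency of 2-generated closures -/
lemma nilp_pair_conj {x y : G} (g : G)
    (h : Group.IsNilpotent (closure ({x, y} : Set G))) :
    Group.IsNilpotent (closure ({g * x * g⁻¹, g * y * g⁻¹} : Set G)) := by
  have hmap : closure ({g * x * g⁻¹, g * y * g⁻¹} : Set G)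
      = Subgroup.map (MulAut.conj g).toMonoidHom (closure ({x, y} : Set G)) := by
    rw [MonoidHom.map_closure, Set.image_pair]
    rfl
  rw [hmap]
  haveI := h
  exact nilpotent_of_mulEquiv
    (equivMapOfInjective _ _ (MulAut.conj g).injective)

/-- a group is not the union of two proper subgroups -/
lemma exists_notMem_pair (H K : Subgroup G) (hH : H ≠ ⊤) (hK : K ≠ ⊤) :
    ∃ z : G, z ∉ H ∧ z ∉ K := by
  obtain ⟨a, ha⟩ : ∃ a, a ∉ H := by
    by_contra h; push_neg at h; exact hH ((Subgroup.eq_top_iff' H).mpr h)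
  obtain ⟨b, hb⟩ : ∃ b, b ∉ K := by
    by_contra h; push_neg at h; exact hK ((Subgroup.eq_top_iff' K).mpr h)
  by_cases haK : a ∈ K
  · by_cases hbH : b ∈ H
    · refine ⟨a * b, fun h => ha ?_, fun h => hb ?_⟩
      · have := mul_mem h (inv_mem hbH); simpa using this
      · have := mul_mem (inv_mem haK) h; simpa [mul_assoc] using this
    · exact ⟨b, hbH, hb⟩
  · exact ⟨a, ha, haK⟩

end Aux


section AuxP
variable {G : Type*} [Group G]

/-- zpowers of a p-element is a p-group -/
lemma isPGroup_zpowers_of_pelt {p : ℕ} {a : G} (ha : ∃ k : ℕ, a ^ p ^ k = 1) :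
    IsPGroup p (zpowers a) := by
  obtain ⟨k, hk⟩ := ha
  rintro ⟨g, n, rfl⟩
  refine ⟨k, ?_⟩
  have h1 : ((a ^ n) ^ (p ^ k : ℕ) : G) = 1 := by
    rw [← zpow_natCast (a ^ n) (p ^ k), ← zpow_mul, mul_comm, zpow_mul, zpow_natCast, hk, one_zpow]
  ext
  simpa using h1

variable [Finite G]

/-- in a finite group where `⟨a,b⟩` is nilpotent, the product of two `p`-elements
is a `p`-element -/
lemma pelt_mul {p : ℕ} [Fact p.Prime] {a b : G}
    (hnil : Group.IsNilpotent (closure ({a, b} : Set G)))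
    (ha : ∃ k : ℕ, a ^ p ^ k = 1) (hb : ∃ k : ℕ, b ^ p ^ k = 1) :
    ∃ k : ℕ, (a * b) ^ p ^ k = 1 := by
  set H := closure ({a, b} : Set G) with hH
  haveI := hnil
  have haH : a ∈ H := Subgroup.subset_closure (Set.mem_insert _ _)
  have hbH : b ∈ H := Subgroup.subset_closure (Set.mem_insert_of_mem _ rfl)
  set a' : H := ⟨a, haH⟩
  set b' : H := ⟨b, hbH⟩
  -- all Sylow p-subgroups of H are normal
  have hsyl : ∀ (q : ℕ) (_hq : Fact q.Prime) (P : Sylow q H), (P : Subgroup H).Normal := by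
    have htfae := (isNilpotent_of_finite_tfae (G := H)).out 0 3
    exact htfae.mp hnil
  have ha' : ∃ k : ℕ, a' ^ p ^ k = 1 := by
    obtain ⟨k, hk⟩ := ha
    exact ⟨k, by ext; simpa using hk⟩
  have hb' : ∃ k : ℕ, b' ^ p ^ k = 1 := by
    obtain ⟨k, hk⟩ := hb
    exact ⟨k, by ext; simpa using hk⟩
  obtain ⟨P, hP⟩ := (isPGroup_zpowers_of_pelt ha').exists_le_sylow
  obtain ⟨Q, hQ⟩ := (isPGroup_zpowers_of_pelt hb').exists_le_sylow
  haveI := Sylow.unique_of_normal P (hsyl p inferInstance P)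
  have hPQ : Q = P := Subsingleton.elim _ _
  have hab : a' * b' ∈ (P : Subgroup H) := by
    refine mul_mem (hP (mem_zpowers a')) ?_
    rw [← hPQ]
    exact hQ (mem_zpowers b')
  obtain ⟨k, hk⟩ := P.isPGroup' ⟨a' * b', hab⟩
  refine ⟨k, ?_⟩
  simpa using congrArg (fun z : (P : Subgroup H) => ((z : H) : G)) hk

/-- a finite group in which every 2-generated subgroup is nilpotent is nilpotent -/
lemma nilp_of_all_pairs (h : ∀ x y : G, Group.IsNilpotent (closure ({x, y} : Set G))) :
    Group.IsNilpotent G := by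
  apply ((isNilpotent_of_finite_tfae (G := G)).out 3 0).mp
  intro p hp P
  set S : Set G := {g : G | ∃ k : ℕ, g ^ p ^ k = 1} with hS
  have hT : ∀ g ∈ closure S, g ∈ S := by
    intro g hg
    refine closure_induction (fun x hx => hx) ⟨0, by simp⟩
      (fun x y _ _ hx hy => pelt_mul (h x y) hx hy)
      (fun x _ hx => ?_) hg
    obtain ⟨k, hk⟩ := hx
    exact ⟨k, by rw [inv_pow, hk, inv_one]⟩
  -- closure S is a p-group
  have hTp : IsPGroup p (closure S) := by
    rintro ⟨g, hg⟩
    obtain ⟨k, hk⟩ := hT g hg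
    exact ⟨k, by ext; simpa using hk⟩
  -- P ≤ closure S
  have hPle : (P : Subgroup G) ≤ closure S := by
    intro x hx
    apply Subgroup.subset_closure
    obtain ⟨k, hk⟩ := P.isPGroup' ⟨x, hx⟩
    exact ⟨k, by simpa using congrArg Subtype.val hk⟩
  have hPeq : closure S = (P : Subgroup G) := P.is_maximal' hTp hPle
  -- closure S is normal since S is conjugation-invariant
  have hnorm : (closure S).Normal := by
    constructor
    intro n hn g
    apply Subgroup.subset_closure
    obtain ⟨k, hk⟩ := hT n hn
    exact ⟨k, by rw [conj_pow, hk, mul_one, mul_inv_cancel]⟩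
  rw [← hPeq]
  exact hnorm

end AuxP


lemma isPGroup_zpowers_of_pelt' {G : Type*} [Group G] {p : ℕ} {a : G}
    (ha : ∃ k : ℕ, a ^ p ^ k = 1) : IsPGroup p (zpowers a) := by
  obtain ⟨k, hk⟩ := ha
  rintro ⟨g, n, rfl⟩
  refine ⟨k, ?_⟩
  have h1 : ((a ^ n) ^ (p ^ k : ℕ) : G) = 1 := by
    rw [← zpow_natCast (a ^ n) (p ^ k), ← zpow_mul, mul_comm, zpow_mul, zpow_natCast, hk, one_zpow]
  ext
  simpa using h1

/-- Elements of coprime prime-power orders commute in a finite nilpotent group. -/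
lemma commute_of_nilpotent {H : Type*} [Group H] [Finite H] (hnil : Group.IsNilpotent H)
    {p q : ℕ} [hp : Fact p.Prime] [hq : Fact q.Prime] (hpq : p ≠ q) {a b : H}
    (ha : ∃ k : ℕ, a ^ p ^ k = 1) (hb : ∃ k : ℕ, b ^ q ^ k = 1) : Commute a b := by
  haveI := hnil
  have hsylP : ∀ (P : Sylow p H), (P : Subgroup H).Normal := by
    have htfae := (isNilpotent_of_finite_tfae (G := H)).out 0 3
    exact fun P => htfae.mp hnil p hp P
  have hsylQ : ∀ (Q : Sylow q H), (Q : Subgroup H).Normal := by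
    have htfae := (isNilpotent_of_finite_tfae (G := H)).out 0 3
    exact fun Q => htfae.mp hnil q hq Q
  obtain ⟨P, hP⟩ := (isPGroup_zpowers_of_pelt' ha).exists_le_sylow
  obtain ⟨Q, hQ⟩ := (isPGroup_zpowers_of_pelt' hb).exists_le_sylow
  have hdisj : Disjoint (P : Subgroup H) (Q : Subgroup H) := by
    rw [Subgroup.disjoint_def]
    intro x hxP hxQ
    obtain ⟨k, hk⟩ := P.isPGroup' ⟨x, hxP⟩
    obtain ⟨l, hl⟩ := Q.isPGroup' ⟨x, hxQ⟩
    have h1 : orderOf x ∣ p ^ k :=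
      orderOf_dvd_of_pow_eq_one (by simpa using congrArg (fun z : (P : Subgroup H) => (z : H)) hk)
    have h2 : orderOf x ∣ q ^ l :=
      orderOf_dvd_of_pow_eq_one (by simpa using congrArg (fun z : (Q : Subgroup H) => (z : H)) hl)
    have hcop : Nat.Coprime (p ^ k) (q ^ l) :=
      Nat.Coprime.pow k l ((Nat.coprime_primes hp.out hq.out).mpr hpq)
    have : orderOf x = 1 := Nat.dvd_one.mp (hcop ▸ Nat.dvd_gcd h1 h2)
    exact orderOf_eq_one_iff.mp this
  exact Subgroup.commute_of_normal_of_disjoint _ _ (hsylP P) (hsylQ Q) hdisj a b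
    (hP (mem_zpowers a)) (hQ (mem_zpowers b))

section F
variable {G : Type*} [Group G] [Finite G]

lemma exists_nilp_pair (hnn : ¬ Group.IsNilpotent G)
    (hn : ∀ x : G, ∃ H : Subgroup G, (H : Set G) = nilizer x) :
    ∃ u v : G, u ∉ nilSet G ∧ v ∉ nilSet G ∧ u ≠ v ∧
      Group.IsNilpotent (closure ({u, v} : Set G)) := by
  by_contra hcon
  push_neg at hcon
  have hNmul : ∀ {a b : G}, a ∈ nilSet G → b ∈ nilSet G → a * b ∈ nilSet G := by
    intro a b ha hb y
    obtain ⟨K, hK⟩ := hn y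
    have hmem : ∀ z : G, z ∈ K ↔ Group.IsNilpotent (closure ({y, z} : Set G)) := fun z => by
      rw [← SetLike.mem_coe, hK]; rfl
    have haK : a ∈ K := (hmem a).mpr (by rw [Set.pair_comm]; exact ha y)
    have hbK : b ∈ K := (hmem b).mpr (by rw [Set.pair_comm]; exact hb y)
    have : a * b ∈ K := mul_mem haK hbK
    rw [Set.pair_comm]
    exact (hmem (a * b)).mp this
  have hNinv : ∀ {a : G}, a ∈ nilSet G → a⁻¹ ∈ nilSet G := by
    intro a ha y
    rw [closure_pair_inv]
    exact ha y
  have hNone : (1 : G) ∈ nilSet G := fun y => nilp_pair_one y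
  let Nsub : Subgroup G :=
    { carrier := nilSet G
      mul_mem' := hNmul
      one_mem' := hNone
      inv_mem' := hNinv }
  have hex : ∃ x : G, x ∉ nilSet G := by
    by_contra hall
    push_neg at hall
    exact hnn (nilp_of_all_pairs fun x y => hall x y)
  obtain ⟨x₀, hx₀⟩ := hex
  have hinvol : ∀ x : G, x ∉ nilSet G → x⁻¹ = x := by
    intro x hx
    by_contra hne
    have hxinv : x⁻¹ ∉ nilSet G := fun h => hx (by simpa using hNinv h)
    exact hcon x x⁻¹ hx hxinv (fun h => hne h.symm) (nilp_pair_self_inv x)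
  have hxsq : ∀ x : G, x ∉ nilSet G → x * x = 1 := by
    intro x hx
    have h := hinvol x hx
    nth_rewrite 2 [← h]
    exact mul_inv_cancel x
  have hinvert : ∀ x : G, x ∉ nilSet G → ∀ n ∈ Nsub, x * n * x⁻¹ = n⁻¹ := by
    intro x hx n hnN
    have hxn : x * n ∉ nilSet G := by
      intro h
      apply hx
      have : (x * n) * n⁻¹ ∈ Nsub := mul_mem h (inv_mem hnN)
      simp [mul_assoc] at this; exact this
    have h1 : (x * n)⁻¹ = x * n := hinvol _ hxn
    have h2 : n⁻¹ * x⁻¹ = x * n := by rw [← mul_inv_rev]; exact h1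
    have hxx : x⁻¹ = x := hinvol x hx
    have h3 : x * n * x⁻¹ = n⁻¹ * (x⁻¹ * x⁻¹) := by rw [← h2, mul_assoc]
    rw [h3, hxx, hxsq x hx, mul_one]
  by_cases hAB : ∃ x y : G, x ∉ nilSet G ∧ y ∉ nilSet G ∧ x * y ∉ nilSet G
  · obtain ⟨x, y, hx, hy, hxy⟩ := hAB
    have hN2 : ∀ n ∈ Nsub, n * n = 1 := by
      intro n hnN
      have e1 : (x * y) * n * (x * y)⁻¹ = n⁻¹ := hinvert _ hxy n hnN
      have hyn : y * n * y⁻¹ = n⁻¹ := hinvert y hy n hnN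
      have hxn' : x * n⁻¹ * x⁻¹ = n := by
        have h := hinvert x hx n⁻¹ (inv_mem hnN)
        rwa [inv_inv] at h
      have e2 : (x * y) * n * (x * y)⁻¹ = n := by
        have h : (x * y) * n * (x * y)⁻¹ = x * (y * n * y⁻¹) * x⁻¹ := by group
        rw [h, hyn, hxn']
      have hni : n⁻¹ = n := e1.symm.trans e2
      nth_rewrite 1 [← hni]
      exact inv_mul_cancel n
    have hall2 : ∀ g : G, g * g = 1 := by
      intro g
      by_cases hg : g ∈ nilSet G
      · exact hN2 g hg
      · exact hxsq g hg
    have hcomm : ∀ a b : G, a * b = b * a := by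
      intro a b
      have h1 : a * b = (a * b)⁻¹ := mul_eq_one_iff_eq_inv.mp (hall2 (a * b))
      have h2 : a = a⁻¹ := mul_eq_one_iff_eq_inv.mp (hall2 a)
      have h3 : b = b⁻¹ := mul_eq_one_iff_eq_inv.mp (hall2 b)
      rw [h1, mul_inv_rev, ← h3, ← h2]
    apply hnn
    letI : CommGroup G := { (inferInstance : Group G) with mul_comm := hcomm }
    exact CommGroup.isNilpotent
  · push_neg at hAB
    haveI : Fact (Nat.Prime 2) := ⟨Nat.prime_two⟩
    have hP2 : IsPGroup 2 G := by
      intro g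
      by_cases hg : g ∈ nilSet G
      · have hpos : orderOf g ≠ 0 := Nat.pos_iff_ne_zero.mp (orderOf_pos g)
        have hodd : ∀ r : ℕ, r.Prime → r ∣ orderOf g → r = 2 := by
          intro r hr hrdvd
          by_contra hr2
          set m := g ^ (orderOf g / r) with hm
          have hordm : orderOf m = r := orderOf_pow_orderOf_div hpos hrdvd
          have hmN : m ∈ Nsub := pow_mem hg _
          have hmnil : Group.IsNilpotent (closure ({m, x₀} : Set G)) :=
            (show m ∈ nilSet G from hmN) x₀
          have hmH : m ∈ closure ({m, x₀} : Set G) := mem_closure_pair_left m x₀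
          have hx₀H : x₀ ∈ closure ({m, x₀} : Set G) := mem_closure_pair_right m x₀
          haveI : Fact r.Prime := ⟨hr⟩
          have hcomm : Commute (⟨m, hmH⟩ : closure ({m, x₀} : Set G)) ⟨x₀, hx₀H⟩ := by
            refine commute_of_nilpotent hmnil (p := r) (q := 2) hr2 ⟨1, ?_⟩ ⟨1, ?_⟩
            · ext
              have : m ^ r = 1 := by rw [← hordm]; exact pow_orderOf_eq_one m
              simpa [pow_one] using this
            · ext
              have : x₀ ^ 2 = 1 := by rw [pow_two]; exact hxsq x₀ hx₀
              simpa [pow_one] using this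
          have hcG : m * x₀ = x₀ * m := congrArg Subtype.val hcomm
          have h1 : x₀ * m * x₀⁻¹ = m⁻¹ := hinvert x₀ hx₀ m hmN
          have h2 : x₀ * m * x₀⁻¹ = m := by
            rw [← hcG, mul_assoc, mul_inv_cancel, mul_one]
          have hni : m⁻¹ = m := h1.symm.trans h2
          have hm2 : m * m = 1 := by nth_rewrite 1 [← hni]; exact inv_mul_cancel m
          have hdvd : orderOf m ∣ 2 := orderOf_dvd_of_pow_eq_one (by rw [pow_two]; exact hm2)
          rw [hordm] at hdvd
          exact hr2 ((Nat.prime_dvd_prime_iff_eq hr Nat.prime_two).mp hdvd)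
        have heq := Nat.eq_prime_pow_of_unique_prime_dvd hpos
          (fun {d} hd hdd => hodd d hd hdd)
        exact ⟨_, by rw [← heq]; exact pow_orderOf_eq_one g⟩
      · exact ⟨1, by rw [pow_one, pow_two]; exact hxsq g hg⟩
    exact hnn hP2.isNilpotent

end F

theorem stmt19 {G : Type*} [Group G] [Finite G] (hnn : ¬ Group.IsNilpotent G)
    (hn : ∀ x : G, ∃ H : Subgroup G, (H : Set G) = nilizer x) :
    ((nonNilpGraph G).induce {x : G | x ∉ nilSet G}).Connected ∧
    (∀ u v : {x : G | x ∉ nilSet G},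
      ((nonNilpGraph G).induce {x : G | x ∉ nilSet G}).dist u v ≤ 2) ∧
    (∃ u v : {x : G | x ∉ nilSet G},
      ((nonNilpGraph G).induce {x : G | x ∉ nilSet G}).dist u v = 2) ∧
    (∀ x y : G, x ∉ nilSet G → y ∉ nilSet G → ¬ (nonNilpGraph G).Adj x y →
      ∃ z : G, ¬ Group.IsNilpotent (Subgroup.closure ({x, z} : Set G)) ∧
        ¬ Group.IsNilpotent (Subgroup.closure ({y, z} : Set G))) := by
  classical
  have hKmem : ∀ x : G, ∃ K : Subgroup G,
      ∀ z : G, z ∈ K ↔ Group.IsNilpotent (closure ({x, z} : Set G)) := by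
    intro x
    obtain ⟨K, hK⟩ := hn x
    exact ⟨K, fun z => by rw [← SetLike.mem_coe, hK]; rfl⟩
  choose Hx hHx using hKmem
  have hne_top : ∀ x : G, x ∉ nilSet G → Hx x ≠ ⊤ := by
    intro x hx htop
    apply hx
    intro y
    exact (hHx x y).mp (htop ▸ Subgroup.mem_top y)
  have key : ∀ x y : G, x ∉ nilSet G → y ∉ nilSet G →
      ∃ z : G, ¬ Group.IsNilpotent (closure ({x, z} : Set G)) ∧
        ¬ Group.IsNilpotent (closure ({y, z} : Set G)) := by
    intro x y hx hy
    obtain ⟨z, hz1, hz2⟩ := exists_notMem_pair (Hx x) (Hx y) (hne_top x hx) (hne_top y hy)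
    exact ⟨z, fun h => hz1 ((hHx x z).mpr h), fun h => hz2 ((hHx y z).mpr h)⟩
  have hz_not : ∀ {x z : G}, ¬ Group.IsNilpotent (closure ({x, z} : Set G)) →
      z ∉ nilSet G := by
    intro x z h hz
    exact h (by rw [Set.pair_comm]; exact hz x)
  have hz_ne : ∀ {x z : G}, ¬ Group.IsNilpotent (closure ({x, z} : Set G)) → x ≠ z := by
    intro x z h he
    exact h (by rw [← he]; exact nilp_pair_self x)
  have hstep : ∀ u v : {x : G | x ∉ nilSet G},
      ∃ w : ((nonNilpGraph G).induce {x : G | x ∉ nilSet G}).Walk u v, w.length ≤ 2 := by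
    intro u v
    obtain ⟨z, hz1, hz2⟩ := key (↑u) (↑v) u.2 v.2
    have hzs : z ∈ {x : G | x ∉ nilSet G} := hz_not hz1
    have h1 : ((nonNilpGraph G).induce {x : G | x ∉ nilSet G}).Adj u ⟨z, hzs⟩ :=
      ⟨hz_ne hz1, hz1⟩
    have h2 : ((nonNilpGraph G).induce {x : G | x ∉ nilSet G}).Adj ⟨z, hzs⟩ v :=
      ⟨fun h => (hz_ne hz2) h.symm, by rw [Set.pair_comm]; exact hz2⟩
    exact ⟨SimpleGraph.Walk.cons h1 (SimpleGraph.Walk.cons h2 SimpleGraph.Walk.nil), by simp⟩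
  have hpre : ((nonNilpGraph G).induce {x : G | x ∉ nilSet G}).Preconnected := by
    intro u v
    obtain ⟨w, -⟩ := hstep u v
    exact ⟨w⟩
  have hnonempty : Nonempty ({x : G | x ∉ nilSet G}) := by
    have hex : ∃ x : G, x ∉ nilSet G := by
      by_contra hall
      push_neg at hall
      exact hnn (nilp_of_all_pairs fun x y => hall x y)
    obtain ⟨x, hx⟩ := hex
    exact ⟨⟨x, hx⟩⟩
  have hconn : ((nonNilpGraph G).induce {x : G | x ∉ nilSet G}).Connected := by
    haveI := hnonempty
    exact SimpleGraph.Connected.mk hpre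
  have hdist2 : ∀ u v : {x : G | x ∉ nilSet G},
      ((nonNilpGraph G).induce {x : G | x ∉ nilSet G}).dist u v ≤ 2 := by
    intro u v
    obtain ⟨w, hw⟩ := hstep u v
    exact le_trans (SimpleGraph.dist_le w) hw
  refine ⟨hconn, hdist2, ?_, fun x y hx hy _ => key x y hx hy⟩
  obtain ⟨a, b, ha, hb, hab, habnil⟩ := exists_nilp_pair hnn hn
  refine ⟨⟨a, ha⟩, ⟨b, hb⟩, ?_⟩
  have hne : (⟨a, ha⟩ : {x : G | x ∉ nilSet G}) ≠ ⟨b, hb⟩ :=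
    fun h => hab (congrArg Subtype.val h)
  have hnotadj : ¬ ((nonNilpGraph G).induce {x : G | x ∉ nilSet G}).Adj ⟨a, ha⟩ ⟨b, hb⟩ :=
    fun h => h.2 habnil
  have hle := hdist2 ⟨a, ha⟩ ⟨b, hb⟩
  have hr : ((nonNilpGraph G).induce {x : G | x ∉ nilSet G}).Reachable ⟨a, ha⟩ ⟨b, hb⟩ :=
    hpre _ _
  have h0 : ((nonNilpGraph G).induce {x : G | x ∉ nilSet G}).dist ⟨a, ha⟩ ⟨b, hb⟩ ≠ 0 :=
    fun h => hne (hr.dist_eq_zero_iff.mp h)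
  have h1 : ((nonNilpGraph G).induce {x : G | x ∉ nilSet G}).dist ⟨a, ha⟩ ⟨b, hb⟩ ≠ 1 :=
    fun h => hnotadj (SimpleGraph.dist_eq_one_iff_adj.mp h)
  omega
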